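/- arXiv:math/0703412 — 2 statements merged into one kernel-verified Lean document; each statement's English description precedes it below -/
import Mathlib

section
/- Let T be a maximal monotone operator on ℝⁿ with T^{-1}(0) ≠ ∅. Then the proximal point iteration x^{p+1} = (I + T)^{-1}(x^p), starting from any x⁰ ∈ ℝⁿ, converges to a point x* satisfying 0 ∈ T(x*). -/
open scoped RealInnerProductSpace

/-- A multivalued operator on `E` is monotone. -/
def IsMonotoneOp {n : ℕ} (T : EuclideanSpace ℝ (Fin n) → Set (EuclideanSpace ℝ (Fin n))) : Prop :=
  ∀ x y u v, u ∈ T x → v ∈ T y → 0 ≤ ⟪u - v, x - y⟫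

/-- A multivalued operator is maximal monotone. -/
def IsMaximalMonotoneOp {n : ℕ}
    (T : EuclideanSpace ℝ (Fin n) → Set (EuclideanSpace ℝ (Fin n))) : Prop :=
  IsMonotoneOp T ∧ ∀ S : EuclideanSpace ℝ (Fin n) → Set (EuclideanSpace ℝ (Fin n)),
    IsMonotoneOp S → (∀ x, T x ⊆ S x) → ∀ x, S x = T x

theorem proximal_point_algorithm_converges (n : ℕ)
    (T : EuclideanSpace ℝ (Fin n) → Set (EuclideanSpace ℝ (Fin n)))
    (hT : IsMaximalMonotoneOp T)
    (F : EuclideanSpace ℝ (Fin n) → EuclideanSpace ℝ (Fin n))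
    (hF : ∀ x y, F x = y ↔ x - y ∈ T y)
    (hsol : ∃ z, 0 ∈ T z)
    (x : ℕ → EuclideanSpace ℝ (Fin n))
    (hx : ∀ p, x (p + 1) = F (x p)) :
    ∃ xstar, 0 ∈ T xstar ∧ Filter.Tendsto x Filter.atTop (nhds xstar) := by
  classical
  -- firm nonexpansiveness of the resolvent
  have h_firm : ∀ a b, ‖F a - F b‖ ^ 2 + ‖(a - F a) - (b - F b)‖ ^ 2 ≤ ‖a - b‖ ^ 2 := by
    intro a b
    have hu : a - F a ∈ T (F a) := (hF a (F a)).mp rfl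
    have hv : b - F b ∈ T (F b) := (hF b (F b)).mp rfl
    have hmono := hT.1 (F a) (F b) _ _ hu hv
    have hab : a - b = (F a - F b) + ((a - F a) - (b - F b)) := by abel
    have hsq := norm_add_sq_real (F a - F b) ((a - F a) - (b - F b))
    rw [hab, hsq]
    have hcomm : ⟪F a - F b, (a - F a) - (b - F b)⟫
        = ⟪(a - F a) - (b - F b), F a - F b⟫ := real_inner_comm _ _
    linarith [hmono, hcomm]
  have h_nonexp : ∀ a b, ‖F a - F b‖ ≤ ‖a - b‖ := by
    intro a b
    have h := h_firm a b
    nlinarith [norm_nonneg (F a - F b), norm_nonneg (a - b),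
      sq_nonneg (‖(a - F a) - (b - F b)‖)]
  obtain ⟨z, hz⟩ := hsol
  have hFz : F z = z := (hF z z).mpr (by simpa using hz)
  -- Fejér monotonicity w.r.t. z
  have hFejer : ∀ p, ‖x (p + 1) - z‖ ^ 2 + ‖x p - x (p + 1)‖ ^ 2 ≤ ‖x p - z‖ ^ 2 := by
    intro p
    have h := h_firm (x p) z
    rw [hFz, ← hx p] at h
    simpa using h
  set e : ℕ → ℝ := fun p => ‖x p - z‖ ^ 2 with he
  have he_anti : Antitone e := by
    apply antitone_nat_of_succ_le
    intro p
    have h := hFejer p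
    have := sq_nonneg (‖x p - x (p + 1)‖)
    simp only [he]
    linarith
  have he_bdd : BddBelow (Set.range e) := by
    refine ⟨0, ?_⟩
    rintro _ ⟨p, rfl⟩
    positivity
  have he_lim : Filter.Tendsto e Filter.atTop (nhds (⨅ p, e p)) :=
    tendsto_atTop_ciInf he_anti he_bdd
  -- the successive differences go to 0
  have hdiff_sq : Filter.Tendsto (fun p => ‖x p - x (p + 1)‖ ^ 2) Filter.atTop (nhds 0) := by
    have h1 : Filter.Tendsto (fun p => e p - e (p + 1)) Filter.atTop (nhds 0) := by
      have h2 : Filter.Tendsto (fun p => e (p + 1)) Filter.atTop (nhds (⨅ p, e p)) :=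
        he_lim.comp (Filter.tendsto_add_atTop_nat 1)
      simpa using he_lim.sub h2
    apply squeeze_zero (fun p => by positivity) _ h1
    intro p
    have h := hFejer p
    simp only [he]
    linarith
  have hdiff : Filter.Tendsto (fun p => x p - x (p + 1)) Filter.atTop (nhds 0) := by
    rw [tendsto_zero_iff_norm_tendsto_zero]
    have := (Real.continuous_sqrt.tendsto 0).comp hdiff_sq
    simp only [Function.comp_def, Real.sqrt_zero] at this
    convert this using 2 with p
    rw [Real.sqrt_sq (norm_nonneg _)]
  -- boundedness of the sequence
  have hmem : ∀ p, x p ∈ Metric.closedBall z ‖x 0 - z‖ := by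
    intro p
    rw [Metric.mem_closedBall, dist_eq_norm]
    have h := he_anti (Nat.zero_le p)
    simp only [he] at h
    nlinarith [norm_nonneg (x p - z), norm_nonneg (x 0 - z)]
  obtain ⟨a, -, φ, hφ, hlim⟩ :=
    tendsto_subseq_of_bounded (Metric.isBounded_closedBall (x := z) (r := ‖x 0 - z‖)) hmem
  -- F is continuous
  have hFcont : Continuous F := by
    apply LipschitzWith.continuous (K := 1)
    apply LipschitzWith.of_dist_le_mul
    intro a b
    rw [dist_eq_norm, dist_eq_norm]
    simpa using h_nonexp a b
  -- the limit a is a fixed point of F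
  have hFa : F a = a := by
    have h1 : Filter.Tendsto (fun k => x (φ k) - F (x (φ k))) Filter.atTop (nhds (a - F a)) :=
      hlim.sub ((hFcont.tendsto a).comp hlim)
    have h2 : Filter.Tendsto (fun k => x (φ k) - F (x (φ k))) Filter.atTop (nhds 0) := by
      have := hdiff.comp hφ.tendsto_atTop
      simpa [Function.comp_def, hx] using this
    have := tendsto_nhds_unique h1 h2
    rw [sub_eq_zero] at this
    exact this.symm
  have hTa : (0 : EuclideanSpace ℝ (Fin n)) ∈ T a := by
    have := (hF a a).mp hFa
    simpa using this
  refine ⟨a, hTa, ?_⟩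
  -- Fejér monotonicity w.r.t. a gives full convergence
  set g : ℕ → ℝ := fun p => ‖x p - a‖ with hg
  have hg_anti : Antitone g := by
    apply antitone_nat_of_succ_le
    intro p
    simp only [hg, hx p]
    calc ‖F (x p) - a‖ = ‖F (x p) - F a‖ := by rw [hFa]
    _ ≤ ‖x p - a‖ := h_nonexp _ _
  have hg_bdd : BddBelow (Set.range g) := by
    refine ⟨0, ?_⟩
    rintro _ ⟨p, rfl⟩
    positivity
  have hg_lim : Filter.Tendsto g Filter.atTop (nhds (⨅ p, g p)) :=
    tendsto_atTop_ciInf hg_anti hg_bdd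
  have hg_sub : Filter.Tendsto (g ∘ φ) Filter.atTop (nhds 0) := by
    have h1 : Filter.Tendsto (fun k => x (φ k) - a) Filter.atTop (nhds 0) := by
      simpa using hlim.sub (tendsto_const_nhds (x := a))
    have := h1.norm
    simpa [Function.comp_def, hg] using this
  have hg0 : (⨅ p, g p) = 0 :=
    tendsto_nhds_unique (hg_lim.comp hφ.tendsto_atTop) hg_sub
  rw [tendsto_iff_dist_tendsto_zero]
  simp only [dist_eq_norm]
  rw [← hg0]
  exact hg_lim
end

section
/- Let A : ℝⁿ → ℝⁿ be a single-valued monotone continuous operator such that the equation A x = 0 has a solution. Then the iteration x^{p+1} = (I + A)^{-1}(x^p) converges to a point x* with A x* = 0. -/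
open scoped RealInnerProductSpace

theorem resolvent_iteration_monotone_continuous (n : ℕ)
    (A : EuclideanSpace ℝ (Fin n) → EuclideanSpace ℝ (Fin n))
    (hmono : ∀ x y, 0 ≤ ⟪A x - A y, x - y⟫)
    (hcont : Continuous A)
    (hsol : ∃ z, A z = 0)
    (F : EuclideanSpace ℝ (Fin n) → EuclideanSpace ℝ (Fin n))
    (hF : ∀ x, F x + A (F x) = x)
    (x : ℕ → EuclideanSpace ℝ (Fin n))
    (hx : ∀ p, x (p + 1) = F (x p)) :
    ∃ xstar, A xstar = 0 ∧ Filter.Tendsto x Filter.atTop (nhds xstar) := by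
  obtain ⟨z, hz⟩ := hsol
  -- A (x (p+1)) = x p - x (p+1)
  have hA : ∀ p, A (x (p + 1)) = x p - x (p + 1) := by
    intro p
    have h := hF (x p)
    rw [← hx p] at h
    exact eq_sub_of_add_eq' h
  -- key inequality for any zero w of A
  have key : ∀ w, A w = 0 → ∀ p,
      ‖x (p + 1) - w‖ ^ 2 + ‖x (p + 1) - x p‖ ^ 2 ≤ ‖x p - w‖ ^ 2 := by
    intro w hw p
    have h1 := hmono (x (p + 1)) w
    rw [hw, sub_zero, hA p] at h1
    have expand : ‖x p - w‖ ^ 2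
        = ‖x p - x (p + 1)‖ ^ 2 + 2 * ⟪x p - x (p + 1), x (p + 1) - w⟫
          + ‖x (p + 1) - w‖ ^ 2 := by
      rw [← norm_add_sq_real, sub_add_sub_cancel]
    have hrev : ‖x (p + 1) - x p‖ = ‖x p - x (p + 1)‖ := norm_sub_rev _ _
    rw [expand, hrev]
    linarith
  -- squared distances to z are antitone
  have Dant : ∀ w, A w = 0 → Antitone (fun p => ‖x p - w‖ ^ 2) := by
    intro w hw
    refine antitone_nat_of_succ_le fun p => ?_
    have := key w hw p
    have := sq_nonneg ‖x (p + 1) - x p‖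
    linarith
  have Dbdd : ∀ w : EuclideanSpace ℝ (Fin n), BddBelow (Set.range fun p => ‖x p - w‖ ^ 2) := by
    intro w
    exact ⟨0, by rintro _ ⟨p, rfl⟩; positivity⟩
  have Dlim : ∀ w, A w = 0 → Filter.Tendsto (fun p => ‖x p - w‖ ^ 2) Filter.atTop
      (nhds (⨅ p, ‖x p - w‖ ^ 2)) := by
    intro w hw
    exact tendsto_atTop_ciInf (Dant w hw) (Dbdd w)
  -- successive differences tend to zero
  have hsq : Filter.Tendsto (fun p => ‖x (p + 1) - x p‖ ^ 2) Filter.atTop (nhds 0) := by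
    have h1 : Filter.Tendsto (fun p => ‖x p - z‖ ^ 2 - ‖x (p + 1) - z‖ ^ 2)
        Filter.atTop (nhds 0) := by
      have := (Dlim z hz).sub ((Dlim z hz).comp (Filter.tendsto_add_atTop_nat 1))
      simpa using this
    refine squeeze_zero (fun p => by positivity) (fun p => ?_) h1
    have := key z hz p
    linarith
  have hdiff : Filter.Tendsto (fun p => ‖x (p + 1) - x p‖) Filter.atTop (nhds 0) := by
    have := (Real.continuous_sqrt.tendsto 0).comp hsq
    simpa [Function.comp_def, Real.sqrt_sq (norm_nonneg _)] using this
  -- the sequence is bounded; extract a convergent subsequence of u p = x (p+1)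
  set u : ℕ → EuclideanSpace ℝ (Fin n) := fun p => x (p + 1) with hu
  have hub : ∀ p, u p ∈ Metric.closedBall z ‖x 0 - z‖ := by
    intro p
    have h2 : ‖x (p + 1) - z‖ ^ 2 ≤ ‖x 0 - z‖ ^ 2 := Dant z hz (Nat.zero_le (p + 1))
    have : ‖x (p + 1) - z‖ ≤ ‖x 0 - z‖ := by
      nlinarith [norm_nonneg (x (p + 1) - z), norm_nonneg (x 0 - z)]
    simpa [Metric.mem_closedBall, dist_eq_norm] using this
  obtain ⟨xstar, -, φ, hφ, hconv⟩ :=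
    tendsto_subseq_of_bounded Metric.isBounded_closedBall hub
  -- A xstar = 0
  have hAz : A xstar = 0 := by
    have h1 : Filter.Tendsto (fun k => A (u (φ k))) Filter.atTop (nhds (A xstar)) :=
      (hcont.tendsto xstar).comp hconv
    have h2 : Filter.Tendsto (fun k => A (u (φ k))) Filter.atTop (nhds 0) := by
      have h3 : Filter.Tendsto (fun p => A (u p)) Filter.atTop (nhds 0) := by
        rw [show (fun p => A (u p)) = fun p => x p - x (p + 1) by
          funext p; exact hA p]
        rw [tendsto_zero_iff_norm_tendsto_zero]
        simpa [norm_sub_rev] using hdiff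
      exact h3.comp hφ.tendsto_atTop
    exact tendsto_nhds_unique h1 h2
  refine ⟨xstar, hAz, ?_⟩
  -- distances to xstar are antitone and a subsequence tends to 0
  have hinf : (⨅ p, ‖x p - xstar‖ ^ 2) = 0 := by
    have h1 : Filter.Tendsto (fun k => ‖x (φ k + 1) - xstar‖ ^ 2) Filter.atTop (nhds 0) := by
      have h0 : Filter.Tendsto (fun k => ‖u (φ k) - xstar‖) Filter.atTop (nhds 0) :=
        tendsto_iff_norm_sub_tendsto_zero.mp hconv
      have := h0.pow 2
      simpa using this
    have h2 : Filter.Tendsto (fun k => ‖x (φ k + 1) - xstar‖ ^ 2) Filter.atTop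
        (nhds (⨅ p, ‖x p - xstar‖ ^ 2)) :=
      (Dlim xstar hAz).comp ((Filter.tendsto_add_atTop_nat 1).comp hφ.tendsto_atTop)
    exact tendsto_nhds_unique h2 h1
  have hfin : Filter.Tendsto (fun p => ‖x p - xstar‖ ^ 2) Filter.atTop (nhds 0) := by
    have := Dlim xstar hAz
    rwa [hinf] at this
  rw [tendsto_iff_norm_sub_tendsto_zero]
  have := (Real.continuous_sqrt.tendsto 0).comp hfin
  simpa [Function.comp_def, Real.sqrt_sq (norm_nonneg _)] using this
end
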